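/- Let D be the derivation on ℝ[x,y] with D(x) = x·y and D(y) = x², L_n = D^n(x), M_n = D^n(y). Then for all n ≥ 1, Σ_{k=0}^{n} C(n,k)·L_k·L_{n-k} = Σ_{k=0}^{n} C(n,k)·M_k·M_{n-k}. -/

import Mathlib

open MvPolynomial Finset

noncomputable def peakD (f : MvPolynomial (Fin 2) ℝ) : MvPolynomial (Fin 2) ℝ :=
  X 0 * X 1 * pderiv 0 f + X 0 ^ 2 * pderiv 1 f

noncomputable def leftPeakPoly (n : ℕ) : MvPolynomial (Fin 2) ℝ := peakD^[n] (X 0)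

noncomputable def interiorPeakPoly (n : ℕ) : MvPolynomial (Fin 2) ℝ := peakD^[n] (X 1)

lemma peakD_add (f g : MvPolynomial (Fin 2) ℝ) : peakD (f + g) = peakD f + peakD g := by
  simp only [peakD, map_add]; ring

lemma peakD_nsmul (c : ℕ) (f : MvPolynomial (Fin 2) ℝ) : peakD (c • f) = c • peakD f := by
  simp only [peakD, map_nsmul, smul_add, mul_smul_comm]

lemma peakD_sum {ι : Type*} (s : Finset ι) (f : ι → MvPolynomial (Fin 2) ℝ) :
    peakD (∑ i ∈ s, f i) = ∑ i ∈ s, peakD (f i) := by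
  classical
  induction s using Finset.induction with
  | empty => simp [peakD]
  | insert _ _ h ih => simp [Finset.sum_insert h, peakD_add, ih]

lemma peakD_mul (f g : MvPolynomial (Fin 2) ℝ) :
    peakD (f * g) = peakD f * g + f * peakD g := by
  simp only [peakD, Derivation.leibniz, smul_eq_mul]; ring

lemma iterate_peakD_mul (n : ℕ) (p q : MvPolynomial (Fin 2) ℝ) :
    peakD^[n] (p * q) =
      ∑ k ∈ range n.succ, (n.choose k • (peakD^[n - k] p * peakD^[k] q)) := by
  induction n with
  | zero => simp [Finset.range]
  | succ n IH =>
    calc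
      peakD^[n + 1] (p * q) =
          peakD (∑ k ∈ range n.succ,
              n.choose k • (peakD^[n - k] p * peakD^[k] q)) := by
        rw [Function.iterate_succ_apply', IH]
      _ = (∑ k ∈ range n.succ,
            n.choose k • (peakD^[n - k + 1] p * peakD^[k] q)) +
          ∑ k ∈ range n.succ,
            n.choose k • (peakD^[n - k] p * peakD^[k + 1] q) := by
        simp_rw [peakD_sum, peakD_nsmul, peakD_mul, Function.iterate_succ_apply',
          smul_add, sum_add_distrib]
      _ = (∑ k ∈ range n.succ,
                n.choose k.succ • (peakD^[n - k] p * peakD^[k + 1] q)) +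
              1 • (peakD^[n + 1] p * peakD^[0] q) +
            ∑ k ∈ range n.succ, n.choose k • (peakD^[n - k] p * peakD^[k + 1] q) :=
        ?_
      _ = ((∑ k ∈ range n.succ, n.choose k • (peakD^[n - k] p * peakD^[k + 1] q)) +
              ∑ k ∈ range n.succ,
                n.choose k.succ • (peakD^[n - k] p * peakD^[k + 1] q)) +
            1 • (peakD^[n + 1] p * peakD^[0] q) := by
        rw [add_comm, add_assoc]
      _ = (∑ i ∈ range n.succ,
              (n + 1).choose (i + 1) • (peakD^[n + 1 - (i + 1)] p * peakD^[i + 1] q)) +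
            1 • (peakD^[n + 1] p * peakD^[0] q) := by
        simp_rw [Nat.choose_succ_succ, Nat.succ_sub_succ, add_smul, sum_add_distrib]
      _ = ∑ k ∈ range n.succ.succ,
            n.succ.choose k • (peakD^[n.succ - k] p * peakD^[k] q) := by
        rw [sum_range_succ' _ n.succ, Nat.choose_zero_right, tsub_zero]
    congr
    refine (sum_range_succ' _ _).trans (congr_arg₂ (· + ·) ?_ ?_)
    · rw [sum_range_succ, Nat.choose_succ_self, zero_smul, add_zero]
      refine sum_congr rfl fun k hk => ?_
      rw [mem_range] at hk
      congr
      omega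
    · rw [Nat.choose_zero_right, tsub_zero]

theorem peak_convolution_eq (n : ℕ) (hn : 1 ≤ n) :
    ∑ k ∈ Finset.range (n + 1),
        (n.choose k : MvPolynomial (Fin 2) ℝ) * leftPeakPoly k * leftPeakPoly (n - k) =
      ∑ k ∈ Finset.range (n + 1),
        (n.choose k : MvPolynomial (Fin 2) ℝ) * interiorPeakPoly k * interiorPeakPoly (n - k) := by
  obtain ⟨m, rfl⟩ := Nat.exists_eq_add_of_le hn
  have key : peakD^[1 + m] (X 0 * X 0) = peakD^[1 + m] (X 1 * X 1 :
      MvPolynomial (Fin 2) ℝ) := by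
    rw [add_comm 1 m, Function.iterate_succ_apply, Function.iterate_succ_apply]
    congr 1
    simp only [peakD, Derivation.leibniz, pderiv_X, Pi.single_eq_same, smul_eq_mul,
      Pi.single_eq_of_ne (by decide : (0 : Fin 2) ≠ 1),
      Pi.single_eq_of_ne (by decide : (1 : Fin 2) ≠ 0)]
    ring
  have hL : ∀ f : MvPolynomial (Fin 2) ℝ,
      peakD^[1 + m] (f * f) = ∑ k ∈ Finset.range (1 + m + 1),
        ((1 + m).choose k : MvPolynomial (Fin 2) ℝ) * peakD^[k] f * peakD^[1 + m - k] f := by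
    intro f
    rw [iterate_peakD_mul]
    refine Finset.sum_congr rfl fun k hk => ?_
    rw [nsmul_eq_mul, mul_assoc]
    ring
  simpa only [leftPeakPoly, interiorPeakPoly, ← hL] using key
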